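/- Let f : {−1,1}^k → {0,1} be a Boolean function that is not identically zero, and let Ψ be an instance of Max-CSP(f). Then val_Ψ ≥ ρ(f) + B_λ(Ψ)·δ(Ψ), where λ = (f̂({1}),…,f̂({k})) and δ(Ψ) = min{1/(3k), 2·B_λ(Ψ)/(9·ρ(f)·k²)}. -/

import Mathlib

/-- Encoding of {-1,1}: `true ↦ 1`, `false ↦ -1`. -/
def pm (b : Bool) : ℝ := if b then 1 else -1

/-- ρ(f) = 2^{-k}·Σ_x f(x). -/
noncomputable def rho (k : ℕ) (f : (Fin k → Bool) → ℝ) : ℝ :=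
  (∑ x, f x) / 2 ^ k

/-- The Chow parameter (degree-1 Fourier coefficient) f̂({i}) = 2^{-k}·Σ_x f(x)·x_i. -/
noncomputable def chow (k : ℕ) (f : (Fin k → Bool) → ℝ) (i : Fin k) : ℝ :=
  (∑ x, f x * pm (x i)) / 2 ^ k

/-- The value of an assignment `σ` on the Max-CSP(f) instance given by
constraints `(jj i, b i)` with weights `w i`. -/
noncomputable def valCSP (k n m : ℕ) (f : (Fin k → Bool) → ℝ)
    (jj : Fin m → Fin k → Fin n) (b : Fin m → Fin k → Bool) (w : Fin m → ℝ)
    (σ : Fin n → Bool) : ℝ :=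
  (1 / (∑ i, w i)) * ∑ i, w i * f (fun t => b i t == σ (jj i t))

/-- The λ-bias B_λ(Ψ) for λ the vector of Chow parameters of f:
Σ_ℓ |(1/W)·Σ_{i,t : j(i)_t = ℓ} λ_t·w_i·b(i)_t|. -/
noncomputable def biasB (k n m : ℕ) (f : (Fin k → Bool) → ℝ)
    (jj : Fin m → Fin k → Fin n) (b : Fin m → Fin k → Bool) (w : Fin m → ℝ) : ℝ :=
  ∑ ℓ : Fin n,
    |(1 / (∑ i, w i)) *
      ∑ i, ∑ t, (if jj i t = ℓ then chow k f t * w i * pm (b i t) else 0)|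


lemma pm_mul_self (b : Bool) : pm b * pm b = 1 := by cases b <;> simp [pm]

lemma abs_pm (b : Bool) : |pm b| = 1 := by cases b <;> simp [pm]

lemma pm_beq (a c : Bool) : pm (a == c) = pm a * pm c := by
  cases a <;> cases c <;> simp [pm]

noncomputable def chi {k : ℕ} (S : Finset (Fin k)) (y : Fin k → Bool) : ℝ :=
  ∏ t ∈ S, pm (y t)

noncomputable def fhat (k : ℕ) (f : (Fin k → Bool) → ℝ) (S : Finset (Fin k)) : ℝ :=
  (∑ x, f x * chi S x) / 2 ^ k

lemma abs_chi {k : ℕ} (S : Finset (Fin k)) (y : Fin k → Bool) : |chi S y| = 1 := by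
  rw [chi, Finset.abs_prod]
  exact Finset.prod_eq_one fun t _ => abs_pm (y t)

lemma orth {k : ℕ} (x y : Fin k → Bool) :
    ∑ S : Finset (Fin k), chi S x * chi S y = if x = y then (2:ℝ) ^ k else 0 := by
  have h2 : ∑ S : Finset (Fin k), chi S x * chi S y
      = ∏ t : Fin k, (pm (x t) * pm (y t) + 1) := by
    rw [Fintype.prod_add (fun t => pm (x t) * pm (y t)) (fun _ => 1)]
    simp only [Finset.prod_const_one, mul_one]
    exact Finset.sum_congr rfl fun S _ => by
      rw [chi, chi, ← Finset.prod_mul_distrib]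
  rw [h2]
  by_cases hxy : x = y
  · subst hxy
    rw [if_pos rfl,
      Finset.prod_congr rfl
        (fun t _ => by rw [pm_mul_self]; norm_num : ∀ t ∈ Finset.univ, pm (x t) * pm (x t) + 1 = 2)]
    simp
  · rw [if_neg hxy]
    obtain ⟨t, ht⟩ : ∃ t, x t ≠ y t := by
      by_contra h; push_neg at h; exact hxy (funext h)
    apply Finset.prod_eq_zero (Finset.mem_univ t)
    cases hx : x t <;> cases hy : y t <;> simp_all [pm]

lemma fourierExpand {k : ℕ} (f : (Fin k → Bool) → ℝ) (y : Fin k → Bool) :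
    f y = ∑ S : Finset (Fin k), fhat k f S * chi S y := by
  have step : ∑ S : Finset (Fin k), fhat k f S * chi S y
      = ∑ x, f x * (∑ S : Finset (Fin k), chi S x * chi S y) / 2 ^ k := by
    calc ∑ S : Finset (Fin k), fhat k f S * chi S y
        = ∑ S : Finset (Fin k), ∑ x, f x * (chi S x * chi S y) / 2 ^ k := by
          refine Finset.sum_congr rfl fun S _ => ?_
          rw [fhat, div_mul_eq_mul_div, Finset.sum_mul, Finset.sum_div]
          exact Finset.sum_congr rfl fun x _ => by ring
      _ = ∑ x, ∑ S : Finset (Fin k), f x * (chi S x * chi S y) / 2 ^ k :=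
          Finset.sum_comm
      _ = ∑ x, f x * (∑ S : Finset (Fin k), chi S x * chi S y) / 2 ^ k := by
          refine Finset.sum_congr rfl fun x _ => ?_
          rw [Finset.mul_sum, Finset.sum_div]
  rw [step, Finset.sum_congr rfl fun x _ => by rw [orth x y]]
  have h3 : ∀ x ∈ Finset.univ,
      (f x * if x = y then (2:ℝ)^k else 0) / 2^k = if x = y then f x else 0 := by
    intro x _; split <;> simp_all
  rw [Finset.sum_congr rfl h3, Finset.sum_ite_eq' Finset.univ y f]
  simp

lemma abs_fhat_le {k : ℕ} (f : (Fin k → Bool) → ℝ) (hf : ∀ x, 0 ≤ f x)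
    (S : Finset (Fin k)) : |fhat k f S| ≤ (∑ x, f x) / 2 ^ k := by
  rw [fhat, abs_div, abs_of_nonneg (by positivity : (0:ℝ) ≤ (2:ℝ)^k)]
  gcongr
  calc |∑ x, f x * chi S x| ≤ ∑ x, |f x * chi S x| := Finset.abs_sum_le_sum_abs _ _
    _ = ∑ x, f x := by
        refine Finset.sum_congr rfl fun x _ => ?_
        rw [abs_mul, abs_chi, mul_one, abs_of_nonneg (hf x)]

lemma prodMeasure (n : ℕ) (e : Fin n → ℝ) (T : Finset (Fin n)) :
    ∑ σ : Fin n → Bool, (∏ ℓ, (1 + pm (σ ℓ) * e ℓ)/2) * ∏ ℓ ∈ T, pm (σ ℓ)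
      = ∏ ℓ ∈ T, e ℓ := by
  classical
  have h1 : ∀ σ : Fin n → Bool,
      (∏ ℓ, (1 + pm (σ ℓ) * e ℓ)/2) * ∏ ℓ ∈ T, pm (σ ℓ)
        = ∏ ℓ, ((1 + pm (σ ℓ) * e ℓ)/2 * (if ℓ ∈ T then pm (σ ℓ) else 1)) := by
    intro σ
    rw [Finset.prod_mul_distrib]
    congr 1
    rw [Finset.prod_ite_mem Finset.univ T (fun ℓ => pm (σ ℓ)), Finset.univ_inter]
  rw [Finset.sum_congr rfl fun σ _ => h1 σ]
  rw [← Fintype.prod_sum (fun ℓ (c : Bool) => (1 + pm c * e ℓ)/2 * (if ℓ ∈ T then pm c else 1))]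
  have h2 : ∀ ℓ : Fin n, (∑ c : Bool, (1 + pm c * e ℓ)/2 * (if ℓ ∈ T then pm c else 1))
      = if ℓ ∈ T then e ℓ else 1 := by
    intro ℓ
    rw [Fintype.sum_bool]
    split <;> simp [pm] <;> ring
  rw [Finset.prod_congr rfl fun ℓ _ => h2 ℓ]
  rw [Finset.prod_ite_mem Finset.univ T e, Finset.univ_inter]

lemma measure_total (n : ℕ) (e : Fin n → ℝ) :
    ∑ σ : Fin n → Bool, (∏ ℓ, (1 + pm (σ ℓ) * e ℓ)/2) = 1 := by
  have := prodMeasure n e ∅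
  simpa using this

lemma measure_nonneg (n : ℕ) (e : Fin n → ℝ) (he : ∀ ℓ, |e ℓ| ≤ 1) (σ : Fin n → Bool) :
    0 ≤ ∏ ℓ, (1 + pm (σ ℓ) * e ℓ)/2 := by
  apply Finset.prod_nonneg
  intro ℓ _
  have h := abs_le.mp (he ℓ)
  cases hc : σ ℓ <;> simp [pm] <;> nlinarith [h.1, h.2]

lemma constraint_exp (k n : ℕ) (f : (Fin k → Bool) → ℝ)
    (j1 : Fin k → Fin n) (hj1 : Function.Injective j1)
    (b1 : Fin k → Bool) (e : Fin n → ℝ) :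
    ∑ σ : Fin n → Bool, (∏ ℓ, (1 + pm (σ ℓ) * e ℓ)/2) * f (fun t => b1 t == σ (j1 t))
      = ∑ S : Finset (Fin k), fhat k f S * ((∏ t ∈ S, pm (b1 t)) * ∏ t ∈ S, e (j1 t)) := by
  classical
  have hchi : ∀ (σ : Fin n → Bool) (S : Finset (Fin k)),
      chi S (fun t => b1 t == σ (j1 t))
        = (∏ t ∈ S, pm (b1 t)) * ∏ ℓ ∈ S.image j1, pm (σ ℓ) := by
    intro σ S
    rw [Finset.prod_image (fun a _ c _ h => hj1 h)]
    rw [chi, ← Finset.prod_mul_distrib]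
    exact Finset.prod_congr rfl fun t _ => pm_beq _ _
  calc ∑ σ : Fin n → Bool, (∏ ℓ, (1 + pm (σ ℓ) * e ℓ)/2) * f (fun t => b1 t == σ (j1 t))
      = ∑ σ : Fin n → Bool, ∑ S : Finset (Fin k),
          fhat k f S * ((∏ t ∈ S, pm (b1 t)) *
            ((∏ ℓ, (1 + pm (σ ℓ) * e ℓ)/2) * ∏ ℓ ∈ S.image j1, pm (σ ℓ))) := by
        refine Finset.sum_congr rfl fun σ _ => ?_
        rw [fourierExpand f (fun t => b1 t == σ (j1 t)), Finset.mul_sum]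
        refine Finset.sum_congr rfl fun S _ => ?_
        rw [hchi σ S]; ring
    _ = ∑ S : Finset (Fin k), ∑ σ : Fin n → Bool,
          fhat k f S * ((∏ t ∈ S, pm (b1 t)) *
            ((∏ ℓ, (1 + pm (σ ℓ) * e ℓ)/2) * ∏ ℓ ∈ S.image j1, pm (σ ℓ))) :=
        Finset.sum_comm
    _ = ∑ S : Finset (Fin k), fhat k f S * ((∏ t ∈ S, pm (b1 t)) * ∏ t ∈ S, e (j1 t)) := by
        refine Finset.sum_congr rfl fun S _ => ?_
        rw [← Finset.mul_sum, ← Finset.mul_sum, prodMeasure n e (S.image j1),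
          Finset.prod_image (fun a _ c _ h => hj1 h)]

lemma sum_small {k : ℕ} (g : Finset (Fin k) → ℝ) :
    ∑ S ∈ Finset.filter (fun S => S.card ≤ 1) Finset.univ, g S = g ∅ + ∑ t, g {t} := by
  classical
  have hset : Finset.filter (fun S : Finset (Fin k) => S.card ≤ 1) Finset.univ
      = insert ∅ (Finset.image (fun t : Fin k => ({t} : Finset (Fin k))) Finset.univ) := by
    ext S
    simp only [Finset.mem_filter, Finset.mem_univ, true_and, Finset.mem_insert,
      Finset.mem_image]
    rw [Nat.le_one_iff_eq_zero_or_eq_one, Finset.card_eq_zero, Finset.card_eq_one]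
    aesop
  rw [hset, Finset.sum_insert (by simp), Finset.sum_image (by
    intro a _ c _ h
    exact Finset.singleton_injective h)]

lemma sum_eps_pow {k : ℕ} (ε : ℝ) :
    ∑ S : Finset (Fin k), ε ^ S.card = (1 + ε) ^ k := by
  classical
  have := Fintype.prod_add (fun _ : Fin k => ε) (fun _ : Fin k => 1)
  simp only [Finset.prod_const, Finset.prod_const_one, mul_one, one_pow] at this
  rw [← this, Finset.card_univ, Fintype.card_fin, add_comm]

lemma exp_quad {x : ℝ} (h0 : 0 ≤ x) (h1 : x ≤ 1) :
    Real.exp x ≤ 1 + x + x ^ 2 * (3 / 4) := by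
  have h := Real.exp_bound' h0 h1 (by norm_num : 0 < 2)
  have : (∑ m ∈ Finset.range 2, x ^ m / m.factorial) = 1 + x := by
    simp [Finset.sum_range_succ]
  rw [this] at h
  calc Real.exp x ≤ 1 + x + x ^ 2 * (2 + 1) / (2 * 2) := by
        convert h using 2; norm_num [Nat.factorial]
    _ ≤ 1 + x + x ^ 2 * (3 / 4) := by ring_nf; nlinarith

lemma binom_quad {k : ℕ} {ε : ℝ} (h0 : 0 ≤ ε) (h1 : (k : ℝ) * ε ≤ 1) :
    (1 + ε) ^ k - 1 - (k : ℝ) * ε ≤ 3 / 4 * ((k : ℝ) ^ 2 * ε ^ 2) := by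
  have hle : (1 + ε) ^ k ≤ Real.exp ((k : ℝ) * ε) := by
    calc (1 + ε) ^ k ≤ Real.exp ε ^ k := by
          apply pow_le_pow_left₀ (by linarith) (by linarith [Real.add_one_le_exp ε])
      _ = Real.exp ((k : ℝ) * ε) := by rw [← Real.exp_nat_mul]
  have h2 := exp_quad (by positivity) h1
  nlinarith [sq_nonneg ((k:ℝ) * ε)]


set_option maxHeartbeats 1000000 in
theorem stmt_14 (k n m : ℕ) (hk : 0 < k)
    (f : (Fin k → Bool) → ℝ) (hf01 : ∀ x, f x = 0 ∨ f x = 1)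
    (hfne : ∃ x, f x = 1)
    (jj : Fin m → Fin k → Fin n) (hjj : ∀ i, Function.Injective (jj i))
    (b : Fin m → Fin k → Bool) (w : Fin m → ℝ) (hw : ∀ i, 0 ≤ w i)
    (hW : 0 < ∑ i, w i) :
    ∃ σ : Fin n → Bool,
      valCSP k n m f jj b w σ
        ≥ rho k f + biasB k n m f jj b w *
            min (1 / (3 * (k : ℝ)))
              (2 * biasB k n m f jj b w / (9 * rho k f * (k : ℝ) ^ 2)) := by
  classical
  set W : ℝ := ∑ i, w i with hWdef
  set ρ : ℝ := rho k f with hρdef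
  set B : ℝ := biasB k n m f jj b w with hBdef
  -- basic positivity facts
  have hf0 : ∀ x, 0 ≤ f x := fun x => by rcases hf01 x with h | h <;> rw [h] <;> norm_num
  have hρpos : 0 < ρ := by
    obtain ⟨x0, hx0⟩ := hfne
    have h1 : (1:ℝ) ≤ ∑ x, f x := by
      rw [← hx0]
      exact Finset.single_le_sum (fun x _ => hf0 x) (Finset.mem_univ x0)
    rw [hρdef, rho]
    positivity
  have hB0 : 0 ≤ B := Finset.sum_nonneg fun ℓ _ => abs_nonneg _
  have hkR : (0:ℝ) < k := by exact_mod_cast hk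
  set δ : ℝ := min (1 / (3 * (k : ℝ))) (2 * B / (9 * ρ * (k : ℝ) ^ 2)) with hδdef
  have hδ0 : 0 ≤ δ := le_min (by positivity) (by positivity)
  have hδk : δ ≤ 1 / (3 * (k : ℝ)) := min_le_left _ _
  have hδB : 9 * ρ * (k:ℝ)^2 * δ ≤ 2 * B := by
    have := min_le_right (1 / (3 * (k : ℝ))) (2 * B / (9 * ρ * (k : ℝ) ^ 2))
    rw [← hδdef] at this
    rw [mul_comm]
    exact (le_div_iff₀ (by positivity)).mp this
  set ε : ℝ := 2 * δ with hεdef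
  have hε0 : 0 ≤ ε := by positivity
  have hkε : (k:ℝ) * ε ≤ 2/3 := by
    have : (k:ℝ) * δ ≤ 1/3 := by
      calc (k:ℝ) * δ ≤ (k:ℝ) * (1 / (3 * (k:ℝ))) := by
            exact mul_le_mul_of_nonneg_left hδk (le_of_lt hkR)
        _ = 1/3 := by field_simp
    rw [hεdef]; linarith
  -- the bias vector and signs
  set bias : Fin n → ℝ := fun ℓ => (1 / W) *
      ∑ i, ∑ t, (if jj i t = ℓ then chow k f t * w i * pm (b i t) else 0) with hbiasdef
  set s : Fin n → ℝ := fun ℓ => if 0 ≤ bias ℓ then 1 else -1 with hsdef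
  have hs_abs : ∀ ℓ, |s ℓ| = 1 := by
    intro ℓ
    by_cases h : 0 ≤ bias ℓ <;> simp [hsdef, h]
  have hs_bias : ∀ ℓ, s ℓ * bias ℓ = |bias ℓ| := by
    intro ℓ
    by_cases h : 0 ≤ bias ℓ
    · simp only [hsdef, if_pos h, one_mul]; exact (abs_of_nonneg h).symm
    · simp only [hsdef, if_neg h]
      rw [abs_of_neg (not_le.mp h)]; ring
  set e : Fin n → ℝ := fun ℓ => ε * s ℓ with hedef
  have he_abs : ∀ ℓ, |e ℓ| = ε := by
    intro ℓ; rw [hedef]; rw [abs_mul, hs_abs, mul_one, abs_of_nonneg hε0]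
  have he1 : ∀ ℓ, |e ℓ| ≤ 1 := by
    intro ℓ; rw [he_abs]
    nlinarith [hkR, hkε, mul_le_mul_of_nonneg_right (show (1:ℝ) ≤ k by exact_mod_cast hk) hε0]
  set μ : (Fin n → Bool) → ℝ := fun σ => ∏ ℓ, (1 + pm (σ ℓ) * e ℓ)/2 with hμdef
  set E : ℝ := ∑ σ : Fin n → Bool, μ σ * valCSP k n m f jj b w σ with hEdef
  -- there is an assignment achieving at least E
  obtain ⟨σm, -, hσm⟩ := Finset.exists_max_image Finset.univ (valCSP k n m f jj b w)
    ⟨fun _ => true, Finset.mem_univ _⟩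
  have hmax : E ≤ valCSP k n m f jj b w σm := by
    calc E ≤ ∑ σ : Fin n → Bool, μ σ * valCSP k n m f jj b w σm := by
          rw [hEdef]
          exact Finset.sum_le_sum fun σ _ =>
            mul_le_mul_of_nonneg_left (hσm σ (Finset.mem_univ σ)) (measure_nonneg n e he1 σ)
      _ = valCSP k n m f jj b w σm := by
          rw [← Finset.sum_mul, measure_total n e, one_mul]
  refine ⟨σm, le_trans ?_ hmax⟩
  -- it remains to show ρ + B * δ ≤ E
  set A : Finset (Fin k) → ℝ := fun S => fhat k f S *
      ((1 / W) * ∑ i, w i * ((∏ t ∈ S, pm (b i t)) * ∏ t ∈ S, e (jj i t))) with hAdef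
  have hE : E = ∑ S : Finset (Fin k), A S := by
    rw [hEdef]
    calc ∑ σ : Fin n → Bool, μ σ * valCSP k n m f jj b w σ
        = ∑ σ : Fin n → Bool, ∑ i, (1/W) * (w i *
            (μ σ * f (fun t => b i t == σ (jj i t)))) := by
          refine Finset.sum_congr rfl fun σ _ => ?_
          simp only [valCSP]
          rw [← hWdef, Finset.mul_sum, Finset.mul_sum]
          exact Finset.sum_congr rfl fun i _ => by ring
      _ = ∑ i, ∑ σ : Fin n → Bool, (1/W) * (w i *
            (μ σ * f (fun t => b i t == σ (jj i t)))) := Finset.sum_comm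
      _ = ∑ i, (1/W) * (w i * ∑ σ : Fin n → Bool,
            μ σ * f (fun t => b i t == σ (jj i t))) := by
          refine Finset.sum_congr rfl fun i _ => ?_
          rw [Finset.mul_sum, Finset.mul_sum]
      _ = ∑ i, (1/W) * (w i * ∑ S : Finset (Fin k),
            fhat k f S * ((∏ t ∈ S, pm (b i t)) * ∏ t ∈ S, e (jj i t))) := by
          refine Finset.sum_congr rfl fun i _ => ?_
          simp only [hμdef]
          rw [constraint_exp k n f (jj i) (hjj i) (b i) e]
      _ = ∑ i, ∑ S : Finset (Fin k), (1/W) * (w i *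
            (fhat k f S * ((∏ t ∈ S, pm (b i t)) * ∏ t ∈ S, e (jj i t)))) := by
          refine Finset.sum_congr rfl fun i _ => ?_
          rw [Finset.mul_sum, Finset.mul_sum]
      _ = ∑ S : Finset (Fin k), ∑ i, (1/W) * (w i *
            (fhat k f S * ((∏ t ∈ S, pm (b i t)) * ∏ t ∈ S, e (jj i t)))) :=
          Finset.sum_comm
      _ = ∑ S : Finset (Fin k), A S := by
          refine Finset.sum_congr rfl fun S _ => ?_
          simp only [hAdef]
          rw [Finset.mul_sum, Finset.mul_sum]
          exact Finset.sum_congr rfl fun i _ => by ring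
  have hfhat_empty : fhat k f ∅ = ρ := by
    simp only [fhat, chi, Finset.prod_empty, mul_one, hρdef, rho]
  have hfhat_sing : ∀ t, fhat k f {t} = chow k f t := by
    intro t
    simp only [fhat, chi, Finset.prod_singleton, chow]
  have hAempty : A ∅ = ρ := by
    simp only [hAdef, Finset.prod_empty, one_mul, mul_one, hfhat_empty]
    rw [← hWdef, one_div, inv_mul_cancel₀ (ne_of_gt hW), mul_one]
  have hAsing : ∀ t, A {t}
      = ∑ i, e (jj i t) * ((1/W) * (chow k f t * w i * pm (b i t))) := by
    intro t
    simp only [hAdef, Finset.prod_singleton, hfhat_sing]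
    rw [Finset.mul_sum, Finset.mul_sum]
    exact Finset.sum_congr rfl fun i _ => by ring
  have hBalt : B = ∑ ℓ, |bias ℓ| := by
    rw [hBdef]
    simp only [biasB, hbiasdef, ← hWdef]
  have hkey : ∑ ℓ, e ℓ * bias ℓ
      = ∑ i, ∑ t, e (jj i t) * ((1/W) * (chow k f t * w i * pm (b i t))) := by
    have h1 : ∀ ℓ, e ℓ * bias ℓ = ∑ i, ∑ t,
        (if jj i t = ℓ then e ℓ * ((1/W) * (chow k f t * w i * pm (b i t))) else 0) := by
      intro ℓ
      simp only [hbiasdef, Finset.mul_sum, mul_ite, mul_zero]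
    rw [Finset.sum_congr rfl fun ℓ _ => h1 ℓ, Finset.sum_comm]
    refine Finset.sum_congr rfl fun i _ => ?_
    rw [Finset.sum_comm]
    refine Finset.sum_congr rfl fun t _ => ?_
    rw [Finset.sum_ite_eq Finset.univ (jj i t)
      (fun ℓ => e ℓ * ((1/W) * (chow k f t * w i * pm (b i t)))),
      if_pos (Finset.mem_univ _)]
  have hlow : ∑ S ∈ Finset.filter (fun S => S.card ≤ 1) Finset.univ, A S = ρ + ε * B := by
    rw [sum_small A, hAempty]
    congr 1
    rw [Finset.sum_congr rfl fun t _ => hAsing t, ← Finset.sum_comm, ← hkey, hBalt,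
      Finset.mul_sum]
    refine Finset.sum_congr rfl fun ℓ _ => ?_
    rw [hedef]
    rw [mul_assoc, hs_bias ℓ]
  have hAbd : ∀ S : Finset (Fin k), |A S| ≤ ρ * ε ^ S.card := by
    intro S
    simp only [hAdef]
    rw [abs_mul]
    have h1 : |fhat k f S| ≤ ρ := by rw [hρdef, rho]; exact abs_fhat_le f hf0 S
    have h2 : |(1/W) * ∑ i, w i * ((∏ t ∈ S, pm (b i t)) * ∏ t ∈ S, e (jj i t))|
        ≤ ε ^ S.card := by
      rw [abs_mul, abs_of_nonneg (by positivity : (0:ℝ) ≤ 1/W)]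
      have hc : ∀ i, |w i * ((∏ t ∈ S, pm (b i t)) * ∏ t ∈ S, e (jj i t))|
          ≤ w i * ε ^ S.card := by
        intro i
        rw [abs_mul, abs_of_nonneg (hw i), abs_mul, Finset.abs_prod, Finset.abs_prod,
          Finset.prod_congr rfl fun t _ => abs_pm (b i t),
          Finset.prod_congr rfl fun t _ => he_abs (jj i t),
          Finset.prod_const_one, one_mul, Finset.prod_const]
      have h3 : |∑ i, w i * ((∏ t ∈ S, pm (b i t)) * ∏ t ∈ S, e (jj i t))|
          ≤ ∑ i, w i * ε ^ S.card :=
        (Finset.abs_sum_le_sum_abs _ _).trans (Finset.sum_le_sum fun i _ => hc i)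
      calc (1/W) * |∑ i, w i * ((∏ t ∈ S, pm (b i t)) * ∏ t ∈ S, e (jj i t))|
          ≤ (1/W) * ∑ i, w i * ε ^ S.card :=
            mul_le_mul_of_nonneg_left h3 (by positivity)
        _ = ε ^ S.card := by
            rw [← Finset.sum_mul, ← hWdef, one_div, ← mul_assoc,
              inv_mul_cancel₀ (ne_of_gt hW), one_mul]
    exact mul_le_mul h1 h2 (abs_nonneg _) (le_of_lt hρpos)
  have hpowsum : ∑ S ∈ Finset.filter (fun S : Finset (Fin k) => ¬ S.card ≤ 1) Finset.univ,
      ε ^ S.card = (1 + ε) ^ k - 1 - (k:ℝ) * ε := by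
    have htot := Finset.sum_filter_add_sum_filter_not Finset.univ
      (fun S : Finset (Fin k) => S.card ≤ 1) (fun S => ε ^ S.card)
    rw [sum_eps_pow ε] at htot
    have hlowpow : ∑ S ∈ Finset.filter (fun S : Finset (Fin k) => S.card ≤ 1)
        Finset.univ, ε ^ S.card = 1 + (k:ℝ) * ε := by
      rw [sum_small (fun S : Finset (Fin k) => ε ^ S.card)]
      simp [Finset.card_univ, mul_comm]
    rw [hlowpow] at htot
    linarith
  have hhigh : |∑ S ∈ Finset.filter (fun S : Finset (Fin k) => ¬ S.card ≤ 1) Finset.univ, A S|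
      ≤ ρ * ((1 + ε) ^ k - 1 - (k:ℝ) * ε) := by
    calc |∑ S ∈ Finset.filter (fun S : Finset (Fin k) => ¬ S.card ≤ 1) Finset.univ, A S|
        ≤ ∑ S ∈ Finset.filter (fun S : Finset (Fin k) => ¬ S.card ≤ 1) Finset.univ, |A S| :=
          Finset.abs_sum_le_sum_abs _ _
      _ ≤ ∑ S ∈ Finset.filter (fun S : Finset (Fin k) => ¬ S.card ≤ 1) Finset.univ, ρ * ε ^ S.card :=
          Finset.sum_le_sum fun S _ => hAbd S
      _ = ρ * ((1 + ε) ^ k - 1 - (k:ℝ) * ε) := by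
          rw [← Finset.mul_sum, hpowsum]
  -- numerics
  have hquad := binom_quad hε0 (by linarith : (k:ℝ) * ε ≤ 1)
  have hEge : ρ + B * δ ≤ E := by
    rw [hE, ← Finset.sum_filter_add_sum_filter_not Finset.univ (fun S => S.card ≤ 1) A, hlow]
    have h1 : -(ρ * ((1 + ε) ^ k - 1 - (k:ℝ) * ε))
        ≤ ∑ S ∈ Finset.filter (fun S : Finset (Fin k) => ¬ S.card ≤ 1) Finset.univ, A S :=
      neg_le_of_abs_le hhigh
    have h2 : ρ * ((1 + ε) ^ k - 1 - (k:ℝ) * ε) ≤ ρ * (3 / 4 * ((k : ℝ) ^ 2 * ε ^ 2)) :=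
      mul_le_mul_of_nonneg_left hquad (le_of_lt hρpos)
    have h3 : ρ * (3 / 4 * ((k : ℝ) ^ 2 * ε ^ 2)) = 3 * ρ * (k:ℝ)^2 * δ^2 := by
      rw [hεdef]; ring
    have h4 : 3 * ρ * (k:ℝ)^2 * δ^2 ≤ δ * B := by
      nlinarith [mul_le_mul_of_nonneg_left hδB hδ0, mul_nonneg hδ0 hB0]
    have h5 : ε * B = 2 * δ * B := by rw [hεdef]
    have h6 : B * δ = δ * B := mul_comm _ _
    linarith [h1, h2, h3, h4, h5, h6]
  linarith [hEge]
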